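/- Suppose for each n, g_n: ℝ^G → ℝ^K are random linear maps converging pointwise in probability to a deterministic injective linear map g: ℝ^G → ℝ^K, and suppose estimators β̂_n satisfy g_n(β̂_n − β_0) → 0 in probability. Then β̂_n → β_0 in probability. -/

import Mathlib

open Matrix MeasureTheory ProbabilityTheory

/-- If random linear maps `g_n` converge pointwise (entrywise) in probability to
a deterministic injective linear map `g`, and `g_n(β̂_n − β₀) → 0` in
probability, then `β̂_n → β₀` in probability. -/
theorem consistency_from_random_linear_maps {Ω : Type*} [MeasurableSpace Ω]
    (μ : Measure Ω) [IsProbabilityMeasure μ] {G K : ℕ}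
    (gn : ℕ → Ω → Matrix (Fin K) (Fin G) ℝ) (g : Matrix (Fin K) (Fin G) ℝ)
    (hmeas : ∀ n i j, Measurable fun ω => gn n ω i j)
    (hginj : Function.Injective g.mulVec)
    (hconv : ∀ i j, TendstoInMeasure μ (fun n ω => gn n ω i j) Filter.atTop
      (fun _ => g i j))
    (βhat : ℕ → Ω → (Fin G → ℝ)) (β0 : Fin G → ℝ)
    (hβmeas : ∀ n j, Measurable fun ω => βhat n ω j)
    (hres : ∀ i, TendstoInMeasure μ
      (fun n ω => (gn n ω).mulVec (βhat n ω - β0) i) Filter.atTop (fun _ => 0)) :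
    ∀ j, TendstoInMeasure μ (fun n ω => βhat n ω j) Filter.atTop
      (fun _ => β0 j) := by
  intro j
  have hG : 0 < G := j.pos
  -- antilipschitz constant for the injective map `g.mulVec`
  obtain ⟨C, hC0, hC⟩ := (Matrix.mulVecLin g).injective_iff_antilipschitz.mp
    (by convert hginj using 1; funext v; simp)
  have hCpos : (0 : ℝ) < C := hC0
  have key : ∀ v : Fin G → ℝ, ‖v‖ ≤ (C : ℝ) * ‖g.mulVec v‖ := by
    intro v
    have := hC.le_mul_dist v 0
    simpa [dist_eq_norm, Matrix.mulVecLin_apply] using this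
  -- entrywise bound on the matrix gives an operator bound (sup norms)
  have bound : ∀ (M : Matrix (Fin K) (Fin G) ℝ) (v : Fin G → ℝ) (η : ℝ), 0 ≤ η →
      (∀ i j', |M i j'| ≤ η) → ‖M.mulVec v‖ ≤ G * η * ‖v‖ := by
    intro M v η hη hM
    have hnn : (0 : ℝ) ≤ G * η * ‖v‖ :=
      mul_nonneg (mul_nonneg (by positivity) hη) (norm_nonneg _)
    rw [pi_norm_le_iff_of_nonneg hnn]
    intro i
    have hmv : M.mulVec v i = ∑ j' : Fin G, M i j' * v j' := by
      simp [Matrix.mulVec, dotProduct]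
    have : |M.mulVec v i| ≤ ∑ j' : Fin G, η * ‖v‖ := by
      rw [hmv]
      refine le_trans (Finset.abs_sum_le_sum_abs _ _) ?_
      refine Finset.sum_le_sum fun j' _ => ?_
      rw [abs_mul]
      exact mul_le_mul (hM i j') (by simpa using norm_le_pi_norm v j')
        (abs_nonneg _) hη
    simpa [Finset.sum_const, Finset.card_univ, mul_assoc] using this
  -- Fin K is nonempty
  have hK : Nonempty (Fin K) := by
    by_contra h
    have h0 : (Pi.single j 1 : Fin G → ℝ) = 0 := by
      apply hginj
      funext i
      exact absurd ⟨i⟩ h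
    simpa using congrFun h0 j
  -- main argument
  rw [tendstoInMeasure_iff_dist]
  intro ε hε
  set η : ℝ := 1 / (2 * C * G) with hηdef
  have hηpos : 0 < η := by positivity
  set δ : ℝ := ε / (4 * C) with hδdef
  have hδpos : 0 < δ := by positivity
  -- bad events
  set A : ℕ → Set Ω := fun n =>
    ⋃ p : Fin K × Fin G, {ω | η ≤ dist (gn n ω p.1 p.2) (g p.1 p.2)} with hA
  set B : ℕ → Set Ω := fun n =>
    ⋃ i : Fin K, {ω | δ ≤ dist ((gn n ω).mulVec (βhat n ω - β0) i) 0} with hB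
  -- inclusion
  have hsub : ∀ n, {ω | ε ≤ dist (βhat n ω j) (β0 j)} ⊆ A n ∪ B n := by
    intro n ω hω
    by_contra hcon
    obtain ⟨hA', hB'⟩ := not_or.mp hcon
    simp only [hA, Set.mem_iUnion, Set.mem_setOf_eq, not_exists, not_le] at hA'
    simp only [hB, Set.mem_iUnion, Set.mem_setOf_eq, not_exists, not_le] at hB'
    set v : Fin G → ℝ := βhat n ω - β0 with hv
    -- entrywise closeness
    have hentry : ∀ i j', |(gn n ω - g) i j'| ≤ η := by
      intro i j'
      have := hA' (i, j')
      simp only [Real.dist_eq] at this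
      exact le_of_lt (by simpa [Matrix.sub_apply] using this)
    -- residual smallness
    have hresid : ‖(gn n ω).mulVec v‖ ≤ δ := by
      rw [pi_norm_le_iff_of_nonneg hδpos.le]
      intro i
      have := hB' i
      simp only [Real.dist_eq, sub_zero] at this
      exact le_of_lt this
    -- combine
    have h1 : ‖v‖ ≤ C * ‖g.mulVec v‖ := key v
    have h2 : g.mulVec v = (gn n ω).mulVec v - (gn n ω - g).mulVec v := by
      rw [Matrix.sub_mulVec]; abel
    have h3 : ‖g.mulVec v‖ ≤ δ + G * η * ‖v‖ := by
      rw [h2]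
      refine le_trans (norm_sub_le _ _) (add_le_add hresid ?_)
      exact bound _ v η hηpos.le hentry
    have h4 : (C : ℝ) * (G * η) = 1 / 2 := by
      field_simp [hηdef]
      rw [hηdef]; field_simp [hCpos.ne', (Nat.cast_pos.mpr hG).ne']
    have h5 : ‖v‖ ≤ C * δ + ‖v‖ / 2 := by
      calc ‖v‖ ≤ C * (δ + G * η * ‖v‖) :=
            le_trans h1 (by exact mul_le_mul_of_nonneg_left h3 hCpos.le)
        _ = C * δ + (C * (G * η)) * ‖v‖ := by ring
        _ = C * δ + ‖v‖ / 2 := by rw [h4]; ring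
    have h6 : ‖v‖ ≤ 2 * (C * δ) := by linarith
    have h7 : 2 * (C * δ) = ε / 2 := by
      field_simp [hδdef]
      rw [hδdef]; field_simp [hCpos.ne']; norm_num
    have h8 : ε ≤ ‖v‖ := by
      have : |v j| = dist (βhat n ω j) (β0 j) := by
        simp [hv, Real.dist_eq, Pi.sub_apply]
      refine le_trans hω ?_
      rw [← this]
      simpa using norm_le_pi_norm v j
    rw [h7] at h6
    linarith
  -- the bounding sequence tends to 0
  have hSA : Filter.Tendsto
      (fun n => ∑ p : Fin K × Fin G,
        μ {ω | η ≤ dist (gn n ω p.1 p.2) (g p.1 p.2)}) Filter.atTop (nhds 0) := by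
    have : Filter.Tendsto
        (fun n => ∑ p : Fin K × Fin G,
          μ {ω | η ≤ dist (gn n ω p.1 p.2) (g p.1 p.2)}) Filter.atTop
        (nhds (∑ _p : Fin K × Fin G, 0)) :=
      tendsto_finset_sum _ fun p _ => (tendstoInMeasure_iff_dist.mp (hconv p.1 p.2)) η hηpos
    simpa using this
  have hSB : Filter.Tendsto
      (fun n => ∑ i : Fin K,
        μ {ω | δ ≤ dist ((gn n ω).mulVec (βhat n ω - β0) i) 0}) Filter.atTop
      (nhds 0) := by
    have : Filter.Tendsto
        (fun n => ∑ i : Fin K,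
          μ {ω | δ ≤ dist ((gn n ω).mulVec (βhat n ω - β0) i) 0}) Filter.atTop
        (nhds (∑ _i : Fin K, 0)) :=
      tendsto_finset_sum _ fun i _ => (tendstoInMeasure_iff_dist.mp (hres i)) δ hδpos
    simpa using this
  have hle : ∀ n, μ {ω | ε ≤ dist (βhat n ω j) (β0 j)} ≤
      (∑ p : Fin K × Fin G, μ {ω | η ≤ dist (gn n ω p.1 p.2) (g p.1 p.2)}) +
      (∑ i : Fin K, μ {ω | δ ≤ dist ((gn n ω).mulVec (βhat n ω - β0) i) 0}) := by
    intro n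
    refine le_trans (measure_mono (hsub n)) ?_
    refine le_trans (measure_union_le _ _) (add_le_add ?_ ?_)
    · exact measure_iUnion_fintype_le _ _
    · exact measure_iUnion_fintype_le _ _
  have hsum : Filter.Tendsto
      (fun n =>
        (∑ p : Fin K × Fin G, μ {ω | η ≤ dist (gn n ω p.1 p.2) (g p.1 p.2)}) +
        (∑ i : Fin K, μ {ω | δ ≤ dist ((gn n ω).mulVec (βhat n ω - β0) i) 0}))
      Filter.atTop (nhds 0) := by
    simpa using hSA.add hSB
  exact tendsto_of_tendsto_of_tendsto_of_le_of_le tendsto_const_nhds hsum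
    (fun n => zero_le) hle
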